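/- Under the dual error setting with coercivity constant α_A, one has ∑_{m=0}^{N−1} [ (εᵐ)ᵀ M εᵐ + Δt·(εᵐ)ᵀ A_sym εᵐ ] ≤ ((T + Δt)/α_A)·∑_{m=0}^{N−1} ‖ϱᵐ‖₋₁², where T = N·Δt. -/

import Mathlib

open Matrix BigOperators Finset

/-- The energy norm `‖v‖_{G*} = √(vᵀ G* v)` induced by a matrix `G`. -/
noncomputable def normG {d : ℕ} (G : Matrix (Fin d) (Fin d) ℝ) (v : Fin d → ℝ) : ℝ :=
  Real.sqrt (v ⬝ᵥ G.mulVec v)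

/-- The dual norm `‖r‖₋₁ = sup_{v ≠ 0} (rᵀ v)/‖v‖_{G*}`. -/
noncomputable def dualNorm {d : ℕ} (G : Matrix (Fin d) (Fin d) ℝ) (r : Fin d → ℝ) : ℝ :=
  ⨆ v : {v : Fin d → ℝ // v ≠ 0}, (r ⬝ᵥ (v : Fin d → ℝ)) / normG G (v : Fin d → ℝ)

/-- The symmetric part `(A + Aᵀ)/2` of a matrix. -/
noncomputable def symPart {d : ℕ} (A : Matrix (Fin d) (Fin d) ℝ) : Matrix (Fin d) (Fin d) ℝ :=
  ((1 : ℝ)/2) • (A + Aᵀ)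

variable {d : ℕ}

lemma dot_transpose (A : Matrix (Fin d) (Fin d) ℝ) (v : Fin d → ℝ) :
    v ⬝ᵥ Aᵀ *ᵥ v = v ⬝ᵥ A *ᵥ v := by
  rw [mulVec_transpose, dotProduct_comm, ← dotProduct_mulVec]

lemma symm_dot (M : Matrix (Fin d) (Fin d) ℝ) (hs : Mᵀ = M) (u v : Fin d → ℝ) :
    u ⬝ᵥ M *ᵥ v = v ⬝ᵥ M *ᵥ u := by
  conv_lhs => rw [← hs, mulVec_transpose, dotProduct_comm, ← dotProduct_mulVec]

lemma herm_symm {M : Matrix (Fin d) (Fin d) ℝ} (h : M.IsHermitian) : Mᵀ = M := by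
  exact (isHermitian_iff_isSymm.mp h).eq

lemma normG_sq {G : Matrix (Fin d) (Fin d) ℝ} (hG : G.PosDef) (v : Fin d → ℝ) :
    Real.sqrt (v ⬝ᵥ G *ᵥ v) ^ 2 = v ⬝ᵥ G *ᵥ v := by
  apply Real.sq_sqrt
  simpa using hG.posSemidef.dotProduct_mulVec_nonneg v

lemma cs_psd {G : Matrix (Fin d) (Fin d) ℝ} (hG : G.PosDef) (u v : Fin d → ℝ) :
    (u ⬝ᵥ G *ᵥ v) ^ 2 ≤ (u ⬝ᵥ G *ᵥ u) * (v ⬝ᵥ G *ᵥ v) := by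
  rcases eq_or_ne v 0 with rfl | hv
  · simp
  have hGs : Gᵀ = G := herm_symm hG.1
  set a := u ⬝ᵥ G *ᵥ u
  set b := u ⬝ᵥ G *ᵥ v
  set c := v ⬝ᵥ G *ᵥ v
  have hc : 0 < c := by simpa using hG.dotProduct_mulVec_pos hv
  have key : 0 ≤ (u - (b/c) • v) ⬝ᵥ G *ᵥ (u - (b/c) • v) := by
    simpa using hG.posSemidef.dotProduct_mulVec_nonneg (u - (b/c) • v)
  have expand : (u - (b/c) • v) ⬝ᵥ G *ᵥ (u - (b/c) • v)
      = a - 2*(b/c)*b + (b/c)^2 * c := by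
    have hsy := symm_dot G hGs v u
    simp only [mulVec_sub, mulVec_smul, sub_dotProduct, dotProduct_sub,
      smul_dotProduct, dotProduct_smul, smul_eq_mul] at *
    rw [hsy]; ring
  rw [expand] at key
  have : 0 ≤ a - b^2/c := by
    have : 2*(b/c)*b - (b/c)^2*c = b^2/c := by field_simp; ring
    nlinarith [key]
  calc b^2 = (b^2/c) * c := by field_simp
  _ ≤ a * c := by apply mul_le_mul_of_nonneg_right (by linarith) hc.le


lemma normG_nonneg (G : Matrix (Fin d) (Fin d) ℝ) (v : Fin d → ℝ) : 0 ≤ normG G v :=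
  Real.sqrt_nonneg _

lemma normG_pos {G : Matrix (Fin d) (Fin d) ℝ} (hG : G.PosDef) {v : Fin d → ℝ} (hv : v ≠ 0) :
    0 < normG G v :=
  Real.sqrt_pos.2 (by simpa using hG.dotProduct_mulVec_pos hv)

lemma normG_neg (G : Matrix (Fin d) (Fin d) ℝ) (v : Fin d → ℝ) : normG G (-v) = normG G v := by
  simp [normG, mulVec_neg, dotProduct_neg, neg_dotProduct]

lemma dot_le_norm_mul_norm {G : Matrix (Fin d) (Fin d) ℝ} (hG : G.PosDef) (u v : Fin d → ℝ) :
    u ⬝ᵥ G *ᵥ v ≤ normG G u * normG G v := by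
  have h := cs_psd hG u v
  have h1 : u ⬝ᵥ G *ᵥ v ≤ Real.sqrt ((u ⬝ᵥ G *ᵥ u) * (v ⬝ᵥ G *ᵥ v)) := by
    calc u ⬝ᵥ G *ᵥ v ≤ |u ⬝ᵥ G *ᵥ v| := le_abs_self _
    _ = Real.sqrt ((u ⬝ᵥ G *ᵥ v)^2) := (Real.sqrt_sq_eq_abs _).symm
    _ ≤ _ := Real.sqrt_le_sqrt h
  rwa [Real.sqrt_mul (by simpa using hG.posSemidef.dotProduct_mulVec_nonneg u)] at h1

lemma dualNorm_bdd {G : Matrix (Fin d) (Fin d) ℝ} (hG : G.PosDef) (r : Fin d → ℝ) :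
    BddAbove (Set.range fun v : {v : Fin d → ℝ // v ≠ 0} =>
      (r ⬝ᵥ (v : Fin d → ℝ)) / normG G (v : Fin d → ℝ)) := by
  have hdet : IsUnit G.det := isUnit_iff_ne_zero.2 hG.det_pos.ne'
  set w := G⁻¹ *ᵥ r with hw
  have hGw : G *ᵥ w = r := by
    rw [hw, mulVec_mulVec, mul_nonsing_inv _ hdet, one_mulVec]
  refine ⟨normG G w, ?_⟩
  rintro x ⟨⟨v, hv⟩, rfl⟩
  have hrv : r ⬝ᵥ v = w ⬝ᵥ G *ᵥ v := by
    rw [← hGw, dotProduct_comm, symm_dot G (herm_symm hG.1) v w]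
  rw [div_le_iff₀ (normG_pos hG hv)]
  rw [hrv]
  exact dot_le_norm_mul_norm hG w v

lemma pairing (hd : 1 ≤ d) {G : Matrix (Fin d) (Fin d) ℝ} (hG : G.PosDef)
    (r v : Fin d → ℝ) : r ⬝ᵥ v ≤ dualNorm G r * normG G v := by
  rcases eq_or_ne v 0 with rfl | hv
  · simp [normG]
  · have h1 : (r ⬝ᵥ v) / normG G v ≤ dualNorm G r :=
      le_ciSup (dualNorm_bdd hG r) (⟨v, hv⟩ : {v : Fin d → ℝ // v ≠ 0})
    calc r ⬝ᵥ v = (r ⬝ᵥ v) / normG G v * normG G v :=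
            (div_mul_cancel₀ _ (normG_pos hG hv).ne').symm
    _ ≤ _ := mul_le_mul_of_nonneg_right h1 (normG_nonneg G v)

theorem stmt11 {d : ℕ} (hd : 1 ≤ d)
    (G M A : Matrix (Fin d) (Fin d) ℝ) (hG : G.PosDef) (hM : M.PosSemidef)
    (Δt : ℝ) (hΔt : 0 < Δt) (N : ℕ) (hN : 1 ≤ N)
    (αA : ℝ) (hαA : 0 < αA)
    (hcoA : ∀ v : Fin d → ℝ, αA * (normG G v)^2 ≤ v ⬝ᵥ (symPart A).mulVec v)
    (ε ϱ : ℕ → Fin d → ℝ) (hεN : ε N = 0)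
    (hstep : ∀ k, k < N →
      (M + Δt • Aᵀ).mulVec (ε k) = M.mulVec (ε (k + 1)) - Δt • ϱ k) :
    ∑ m ∈ Finset.range N,
        (ε m ⬝ᵥ M.mulVec (ε m) + Δt * (ε m ⬝ᵥ (symPart A).mulVec (ε m))) ≤
      ((N * Δt + Δt) / αA) * ∑ m ∈ Finset.range N, (dualNorm G (ϱ m))^2 := by
  set E : ℕ → ℝ := fun m => ε m ⬝ᵥ M *ᵥ ε m with hE
  set S : ℕ → ℝ := fun m => ε m ⬝ᵥ (symPart A) *ᵥ ε m with hS
  set ρ : ℕ → ℝ := fun m => dualNorm G (ϱ m) with hρ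
  have hMs : Mᵀ = M := herm_symm hM.1
  have hSA : ∀ v : Fin d → ℝ, v ⬝ᵥ (symPart A) *ᵥ v = v ⬝ᵥ A *ᵥ v := by
    intro v
    simp only [symPart, smul_mulVec, add_mulVec, dotProduct_smul,
      dotProduct_add, dot_transpose, smul_eq_mul]
    ring
  have hSnn : ∀ m, 0 ≤ S m := fun m =>
    le_trans (by positivity) (hcoA (ε m))
  -- per-step estimate
  have Pstep : ∀ m, m < N → E m - E (m+1) + Δt * S m ≤ Δt / αA * ρ m ^ 2 := by
    intro m hm
    have h0 := congrArg (fun w => ε m ⬝ᵥ w) (hstep m hm)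
    simp only [add_mulVec, smul_mulVec, dotProduct_add, dotProduct_smul,
      dotProduct_sub, smul_eq_mul, dot_transpose] at h0
    -- h0 : E m + Δt * (ε m ⬝ᵥ A *ᵥ ε m) = ε m ⬝ᵥ M *ᵥ ε (m+1) - Δt * (ε m ⬝ᵥ ϱ m)
    have heq : E m + Δt * S m
        = ε m ⬝ᵥ M *ᵥ ε (m+1) - Δt * (ε m ⬝ᵥ ϱ m) := by
      rw [hE, hS]; dsimp only; rw [hSA]; exact h0
    set C := ε m ⬝ᵥ M *ᵥ ε (m+1) with hC
    set P := ε m ⬝ᵥ ϱ m with hP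
    have hcross : 2 * C ≤ E m + E (m+1) := by
      have key : 0 ≤ (ε m - ε (m+1)) ⬝ᵥ M *ᵥ (ε m - ε (m+1)) := by
        simpa using hM.dotProduct_mulVec_nonneg (ε m - ε (m+1))
      have hsy := symm_dot M hMs (ε (m+1)) (ε m)
      simp only [mulVec_sub, sub_dotProduct, dotProduct_sub] at key
      rw [hsy] at key
      simp only [hE, hC]
      linarith
    set n := normG G (ε m) with hn
    have hdual : -P ≤ ρ m * n := by
      have h1 := pairing hd hG (ϱ m) (-(ε m))
      rw [normG_neg, dotProduct_neg, dotProduct_comm] at h1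
      simpa [hP, hρ, hn] using h1
    have hyoung : ρ m * n ≤ ρ m ^ 2 / (2 * αA) + (αA / 2) * n ^ 2 := by
      rw [← sub_nonneg]
      have : ρ m ^ 2 / (2 * αA) + (αA / 2) * n ^ 2 - ρ m * n
          = (ρ m - αA * n) ^ 2 / (2 * αA) := by field_simp; ring
      rw [this]; positivity
    have hco : αA * n ^ 2 ≤ S m := hcoA (ε m)
    have h2 : -P ≤ ρ m ^ 2 / (2 * αA) + S m / 2 := by
      refine hdual.trans (hyoung.trans ?_)
      linarith
    have hmul := mul_le_mul_of_nonneg_left h2 hΔt.le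
    rw [mul_add, mul_neg] at hmul
    have hSm2 : Δt * (S m / 2) = Δt * S m / 2 := by ring
    have hρ2 : Δt * (ρ m ^ 2 / (2 * αA)) = Δt / αA * ρ m ^ 2 / 2 := by ring
    rw [hSm2, hρ2] at hmul
    linarith
  -- telescoped estimate
  have key : ∀ k, k ≤ N → E (N - k) + Δt * ∑ m ∈ Finset.Ico (N - k) N, S m
      ≤ Δt / αA * ∑ m ∈ Finset.Ico (N - k) N, ρ m ^ 2 := by
    intro k
    induction k with
    | zero =>
      intro _
      simp only [Nat.sub_zero, Finset.Ico_self, Finset.sum_empty, mul_zero, add_zero]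
      simp [hE, hεN]
    | succ k ih =>
      intro hk
      have hkN : k ≤ N := by omega
      have hj : N - (k+1) < N := by omega
      have hj1 : N - (k+1) + 1 = N - k := by omega
      have hsplit1 : ∑ m ∈ Finset.Ico (N - (k+1)) N, S m
          = S (N - (k+1)) + ∑ m ∈ Finset.Ico (N - k) N, S m := by
        rw [Finset.sum_eq_sum_Ico_succ_bot hj, hj1]
      have hsplit2 : ∑ m ∈ Finset.Ico (N - (k+1)) N, ρ m ^ 2
          = ρ (N - (k+1)) ^ 2 + ∑ m ∈ Finset.Ico (N - k) N, ρ m ^ 2 := by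
        rw [Finset.sum_eq_sum_Ico_succ_bot hj, hj1]
      have hp := Pstep (N - (k+1)) hj
      rw [hj1] at hp
      have := ih hkN
      rw [hsplit1, hsplit2, mul_add, mul_add]
      linarith
  set R := ∑ m ∈ Finset.range N, ρ m ^ 2 with hR
  have hRnn : ∀ j, (0:ℝ) ≤ ρ j ^ 2 := fun j => sq_nonneg _
  have hsubsum : ∀ j, ∑ m ∈ Finset.Ico j N, ρ m ^ 2 ≤ R := by
    intro j
    rw [hR, Finset.range_eq_Ico]
    apply Finset.sum_le_sum_of_subset_of_nonneg
    · intro x hx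
      simp only [Finset.mem_Ico] at hx ⊢
      omega
    · intro i _ _; exact hRnn i
  have hfrac : (0:ℝ) ≤ Δt / αA := by positivity
  have hSsum : Δt * ∑ m ∈ Finset.range N, S m ≤ Δt / αA * R := by
    have h := key N le_rfl
    rw [Nat.sub_self] at h
    have hE0 : 0 ≤ E 0 := by simpa [hE] using hM.dotProduct_mulVec_nonneg (ε 0)
    have h2 := mul_le_mul_of_nonneg_left (hsubsum 0) hfrac
    rw [Finset.range_eq_Ico]
    linarith
  have hEj : ∀ j, j < N → E j ≤ Δt / αA * R := by
    intro j hjN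
    have h := key (N - j) (Nat.sub_le N j)
    rw [Nat.sub_sub_self hjN.le] at h
    have hSsub : 0 ≤ Δt * ∑ m ∈ Finset.Ico j N, S m := by
      apply mul_nonneg hΔt.le
      exact Finset.sum_nonneg fun i _ => hSnn i
    have h2 := mul_le_mul_of_nonneg_left (hsubsum j) hfrac
    linarith
  have hsum : ∑ m ∈ Finset.range N, (E m + Δt * S m)
      = (∑ m ∈ Finset.range N, E m) + Δt * ∑ m ∈ Finset.range N, S m := by
    rw [Finset.sum_add_distrib, Finset.mul_sum]
  have hEsum : ∑ m ∈ Finset.range N, E m ≤ (N : ℝ) * (Δt / αA * R) := by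
    calc ∑ m ∈ Finset.range N, E m ≤ ∑ _m ∈ Finset.range N, (Δt / αA * R) :=
          Finset.sum_le_sum fun i hi => hEj i (Finset.mem_range.1 hi)
    _ = (N : ℝ) * (Δt / αA * R) := by
        rw [Finset.sum_const, Finset.card_range, nsmul_eq_mul]
  have hfinal : (N : ℝ) * (Δt / αA * R) + Δt / αA * R
      = ((N * Δt + Δt) / αA) * R := by ring
  calc ∑ m ∈ Finset.range N, (E m + Δt * S m)
      = (∑ m ∈ Finset.range N, E m) + Δt * ∑ m ∈ Finset.range N, S m := hsum
  _ ≤ (N : ℝ) * (Δt / αA * R) + Δt / αA * R := by linarith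
  _ = ((N * Δt + Δt) / αA) * R := hfinal
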